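/- Let 𝒞 be an abelian category and let w be an admissible class of morphisms of 𝒞. Given a monomorphism j : x → z, a morphism g : x → y, a monomorphism j' : x' → z', a morphism g' : x' → y', and morphisms a : x → x', b : y → y', c : z → z', all three of a, b, c lying in w, such that b∘g = g'∘a and c∘j = j'∘a, the induced morphism on pushouts b ⊔_a c : y ⊔_x z → y' ⊔_{x'} z' also lies in w. (In particular, an admissible class of morphisms satisfies Waldhausen's gluing axiom.) -/

import Mathlib

open CategoryTheory CategoryTheory.Limits ZeroObject

universe v u

/-- An *admissible class* of morphisms in an abelian category: it contains all
isomorphisms, satisfies the two-out-of-three property, and in any morphism of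
short exact sequences, if two of the three vertical morphisms lie in the class
then so does the third. -/
structure AdmissibleClass {C : Type u} [Category.{v} C] [Abelian C]
    (w : MorphismProperty C) : Prop where
  of_isIso : ∀ {x y : C} (f : x ⟶ y), IsIso f → w f
  comp_mem : ∀ {x y z : C} (f : x ⟶ y) (g : y ⟶ z), w f → w g → w (f ≫ g)
  of_comp_left : ∀ {x y z : C} (f : x ⟶ y) (g : y ⟶ z), w g → w (f ≫ g) → w f
  of_comp_right : ∀ {x y z : C} (f : x ⟶ y) (g : y ⟶ z), w f → w (f ≫ g) → w g
  ses_fst : ∀ {S₁ S₂ : ShortComplex C}, S₁.ShortExact → S₂.ShortExact →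
    ∀ (φ : S₁ ⟶ S₂), w φ.τ₂ → w φ.τ₃ → w φ.τ₁
  ses_snd : ∀ {S₁ S₂ : ShortComplex C}, S₁.ShortExact → S₂.ShortExact →
    ∀ (φ : S₁ ⟶ S₂), w φ.τ₁ → w φ.τ₃ → w φ.τ₂
  ses_trd : ∀ {S₁ S₂ : ShortComplex C}, S₁.ShortExact → S₂.ShortExact →
    ∀ (φ : S₁ ⟶ S₂), w φ.τ₁ → w φ.τ₂ → w φ.τ₃

/-- A *`w`-Serre subcategory* of an abelian category `C`, encoded as the set of
its objects: it is closed under isomorphisms, in any short exact sequence if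
two of the three terms belong to it then so does the third, and it is
`w`-closed (closed under sources and targets of morphisms of `w`, hence under
finite zig-zags of morphisms of `w`). -/
structure IsWSerre {C : Type u} [Category.{v} C] [Abelian C]
    (w : MorphismProperty C) (S : Set C) : Prop where
  iso_closed : ∀ {x y : C}, (x ≅ y) → x ∈ S → y ∈ S
  ses_fst : ∀ {T : ShortComplex C}, T.ShortExact → T.X₂ ∈ S → T.X₃ ∈ S → T.X₁ ∈ S
  ses_snd : ∀ {T : ShortComplex C}, T.ShortExact → T.X₁ ∈ S → T.X₃ ∈ S → T.X₂ ∈ S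
  ses_trd : ∀ {T : ShortComplex C}, T.ShortExact → T.X₁ ∈ S → T.X₂ ∈ S → T.X₃ ∈ S
  w_src : ∀ {x y : C} (f : x ⟶ y), w f → y ∈ S → x ∈ S
  w_tgt : ∀ {x y : C} (f : x ⟶ y), w f → x ∈ S → y ∈ S

/-- The pair `(C, w)` satisfies the *factorization axiom*: every morphism `f`
factors as a monomorphism (cofibration) followed by a morphism of `w`. -/
def HasFactorizations {C : Type u} [Category.{v} C] [Abelian C]
    (w : MorphismProperty C) : Prop :=
  ∀ {x y : C} (f : x ⟶ y),
    ∃ (u : C) (i : x ⟶ u) (p : u ⟶ y), Mono i ∧ w p ∧ i ≫ p = f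

/-- The class `w_S` of *`S`-weak equivalences*: morphisms admitting a
factorization as a monomorphism `i` followed by a morphism of `w`, with
`coker i` in `S`. -/
def SWeq {C : Type u} [Category.{v} C] [Abelian C]
    (w : MorphismProperty C) (S : Set C) : MorphismProperty C :=
  fun x y f =>
    ∃ (u : C) (i : x ⟶ u) (p : u ⟶ y),
      Mono i ∧ w p ∧ i ≫ p = f ∧ cokernel i ∈ S

/-- `C^u`: the full subcategory (set of objects) of those `x` such that the
morphism `0 ⟶ x` lies in `u`. -/
def objectsOf {C : Type u} [Category.{v} C] [Abelian C]
    (u : MorphismProperty C) : Set C :=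
  {x : C | u (0 : (0 : C) ⟶ x)}

/-- The short exact sequence `x ↪ y ⊞ z ↠ y ⊔ₓ z` associated to a pushout of a
monomorphism `j : x ⟶ z` along `g : x ⟶ y`. -/
lemma pushout_shortExact {C : Type u} [Category.{v} C] [Abelian C]
    {x y z : C} (g : x ⟶ y) (j : x ⟶ z) [Mono j] :
    (ShortComplex.mk (biprod.lift g (-j))
      (biprod.desc (pushout.inl g j) (pushout.inr g j))
      (by rw [biprod.lift_desc, Preadditive.neg_comp, pushout.condition, add_neg_cancel])).ShortExact := by
  have hmono : Mono (biprod.lift g (-j)) := by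
    have : Mono (biprod.lift g (-j) ≫ biprod.snd) := by
      simpa using (inferInstance : Mono (-j))
    exact mono_of_mono _ biprod.snd
  refine ShortComplex.ShortExact.mk' ?_ hmono ?_
  · exact ShortComplex.exact_of_g_is_cokernel _
      (Abelian.BiproductToPushoutIsCokernel.isColimitBiproductToPushout g j)
  · constructor
    intro R e f hef
    apply pushout.hom_ext
    · have := biprod.inl ≫= hef
      simpa using this
    · have := biprod.inr ≫= hef
      simpa using this

theorem gluing_axiom_of_admissible {C : Type u} [Category.{v} C] [Abelian C]
    {w : MorphismProperty C} (hw : AdmissibleClass w)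
    {x y z x' y' z' : C}
    (j : x ⟶ z) (g : x ⟶ y) (j' : x' ⟶ z') (g' : x' ⟶ y')
    (_ : Mono j) (_ : Mono j')
    (a : x ⟶ x') (b : y ⟶ y') (c : z ⟶ z')
    (ha : w a) (hb : w b) (hc : w c)
    (h₁ : g ≫ b = a ≫ g') (h₂ : j ≫ c = a ≫ j') :
    w (pushout.map g j g' j' b c a h₁ h₂) := by
  -- the split short exact sequences `y ↪ y ⊞ z ↠ z`
  have hsplit : w (biprod.map b c) := by
    have e₁ := (ShortComplex.Splitting.ofHasBinaryBiproduct y z).shortExact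
    have e₂ := (ShortComplex.Splitting.ofHasBinaryBiproduct y' z').shortExact
    exact hw.ses_snd e₁ e₂
      { τ₁ := b, τ₂ := biprod.map b c, τ₃ := c,
        comm₁₂ := by simp, comm₂₃ := by simp } hb hc
  have e₁ := pushout_shortExact g j
  have e₂ := pushout_shortExact g' j'
  exact hw.ses_trd e₁ e₂
    { τ₁ := a, τ₂ := biprod.map b c, τ₃ := pushout.map g j g' j' b c a h₁ h₂,
      comm₁₂ := by
        apply biprod.hom_ext <;> simp [h₁, h₂]
      comm₂₃ := by
        apply biprod.hom_ext'
        · simp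
          exact (pushout.inl_desc _ _ _).symm
        · simp
          exact (pushout.inr_desc _ _ _).symm } ha hsplit
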